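/- Let G be a connected undirected graph with strictly positive edge weights and let H, H' be subgraphs of G where H is connected and balanced (with respect to a linear class of cycles B). If some balanced subgraph strictly dominates H, and H' is chosen among balanced subgraphs dominating H to have minimum cost c_G(H'), then H' is connected. -/
import Mathlib


open scoped Classical

/-- The cost `c_G(H)` of a subgraph `H` of an edge-weighted graph `G`: the total
weight of the "deleted edges" of `H`, i.e. edges of `G` touching `V(H)` that are
not edges of `H` (this is `w(E(G[V(H)]) \ E(H)) + w(δ_G(V(H)))`). -/
noncomputable def subgraphCost {V : Type*} [Fintype V] (G : SimpleGraph V)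
    (w : Sym2 V → ℕ) (H : G.Subgraph) : ℕ :=
  ∑ e ∈ G.edgeFinset.filter (fun e => (∃ x ∈ e, x ∈ H.verts) ∧ e ∉ H.edgeSet), w e

/-- `H'` dominates `H`: `V(H) ⊆ V(H')` and `c_G(H') ≤ c_G(H)`. -/
def Dominates {V : Type*} [Fintype V] (G : SimpleGraph V) (w : Sym2 V → ℕ)
    (H' H : G.Subgraph) : Prop :=
  H.verts ⊆ H'.verts ∧ subgraphCost G w H' ≤ subgraphCost G w H

/-- `H'` strictly dominates `H`: domination with at least one strict inequality. -/
def StrictlyDominates {V : Type*} [Fintype V] (G : SimpleGraph V) (w : Sym2 V → ℕ)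
    (H' H : G.Subgraph) : Prop :=
  Dominates G w H' H ∧
    (H.verts ⊂ H'.verts ∨ subgraphCost G w H' < subgraphCost G w H)

section Aux

variable {V : Type*} {G : SimpleGraph V}

/-- Along a walk in the spanning coercion of a subgraph, membership in the vertex
set propagates from the start to the end. -/
lemma aux_mem_verts_of_walk {H : G.Subgraph} : ∀ {a b : V},
    H.spanningCoe.Walk a b → a ∈ H.verts → b ∈ H.verts
  | _, _, SimpleGraph.Walk.nil, ha => ha
  | _, _, SimpleGraph.Walk.cons h p, _ =>
      aux_mem_verts_of_walk p (SimpleGraph.Subgraph.Adj.snd_mem h)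

/-- A walk in the spanning coercion between two vertices of the subgraph yields
reachability in the coercion. -/
lemma aux_walk_to_coe {H : G.Subgraph} : ∀ {a b : V}
    (_ : H.spanningCoe.Walk a b) (ha : a ∈ H.verts) (hb : b ∈ H.verts),
    H.coe.Reachable ⟨a, ha⟩ ⟨b, hb⟩
  | _, _, SimpleGraph.Walk.nil, _, _ => SimpleGraph.Reachable.refl _
  | _, _, SimpleGraph.Walk.cons h p, ha, hb => by
    have hc : _ ∈ H.verts := SimpleGraph.Subgraph.Adj.snd_mem h
    have h1 : H.coe.Adj ⟨_, ha⟩ ⟨_, hc⟩ := h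
    exact h1.reachable.trans (aux_walk_to_coe p hc hb)

/-- Reachability in the coercion yields reachability in the spanning coercion. -/
lemma aux_coe_to_spanning {H : G.Subgraph} {a b : H.verts}
    (h : H.coe.Reachable a b) : H.spanningCoe.Reachable a.val b.val :=
  h.map ⟨Subtype.val, fun hadj => hadj⟩

/-- Transfer reachability along a relation on edges. -/
lemma aux_reach_transfer {A B : SimpleGraph V} {a b : V}
    (h : A.Reachable a b)
    (step : ∀ x y, A.Adj x y → B.Reachable x y) :
    B.Reachable a b := by
  obtain ⟨p⟩ := h
  induction p with
  | nil => exact SimpleGraph.Reachable.refl _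
  | cons hadj _ ih => exact (step _ _ hadj).trans ih

end Aux

/-- Strict comparison of costs: if the deleted-edge predicate of `K` implies that
of `H'` and there is a `G`-edge deleted in `H'` but not in `K`, then `K` is
strictly cheaper. -/
lemma aux_cost_lt {V : Type*} [Fintype V] {G : SimpleGraph V}
    (w : Sym2 V → ℕ) (hw : ∀ e ∈ G.edgeSet, 0 < w e)
    {K H' : G.Subgraph} {e : Sym2 V} (heG : e ∈ G.edgeSet)
    (hsub : ∀ f ∈ G.edgeSet, ((∃ x ∈ f, x ∈ K.verts) ∧ f ∉ K.edgeSet) →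
        ((∃ x ∈ f, x ∈ H'.verts) ∧ f ∉ H'.edgeSet))
    (heH' : (∃ x ∈ e, x ∈ H'.verts) ∧ e ∉ H'.edgeSet)
    (heK : ¬ ((∃ x ∈ e, x ∈ K.verts) ∧ e ∉ K.edgeSet)) :
    subgraphCost G w K < subgraphCost G w H' := by
  classical
  apply Finset.sum_lt_sum_of_subset
  · intro f hf
    rw [Finset.mem_filter, SimpleGraph.mem_edgeFinset] at hf ⊢
    exact ⟨hf.1, hsub f hf.1 hf.2⟩
  · rw [Finset.mem_filter, SimpleGraph.mem_edgeFinset]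
    exact ⟨heG, heH'⟩
  · rw [Finset.mem_filter]
    rintro ⟨-, hc⟩
    exact heK hc
  · exact hw e heG
  · intro j _ _
    exact Nat.zero_le _

/-- Connectivity of minimum-cost dominating balanced subgraphs: in a connected
graph `G` with strictly positive edge weights, given a notion of balancedness
`B` on subgraphs that is downward closed and preserved by adding an edge between
two components (as holds for the balanced subgraphs of any biased graph), if a
connected balanced subgraph `H` is strictly dominated by some balanced subgraph,
then any balanced subgraph `H'` of minimum cost among the balanced subgraphs
dominating `H` is connected. -/
theorem min_cost_dominating_balanced_subgraph_connected
    {V : Type*} [Fintype V] (G : SimpleGraph V) (hGconn : G.Connected)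
    (w : Sym2 V → ℕ) (hw : ∀ e ∈ G.edgeSet, 0 < w e)
    (B : G.Subgraph → Prop)
    (hBdown : ∀ H K : G.Subgraph, B H → K ≤ H → B K)
    (hBbridge : ∀ (H : G.Subgraph) (x y : V) (hxy : G.Adj x y), B H →
      ¬ H.spanningCoe.Reachable x y → B (H ⊔ G.subgraphOfAdj hxy))
    (H H' : G.Subgraph) (hHconn : H.Connected) (hHbal : B H)
    (hstrict : ∃ K : G.Subgraph, B K ∧ StrictlyDominates G w K H)
    (hH'bal : B H') (hH'dom : Dominates G w H' H)
    (hmin : ∀ K : G.Subgraph, B K → Dominates G w K H →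
      subgraphCost G w H' ≤ subgraphCost G w K) :
    H'.Connected := by
  classical
  obtain ⟨h0, hh0⟩ := hHconn.nonempty
  have hHsub : H.verts ⊆ H'.verts := hH'dom.1
  -- Adding a bridge between two components of `H'` contradicts minimality.
  have bridge : ∀ x y (hxy : G.Adj x y), x ∈ H'.verts → y ∈ H'.verts →
      ¬ H'.spanningCoe.Reachable x y → False := by
    intro x y hxy hxv hyv hreach
    set K := H' ⊔ G.subgraphOfAdj hxy with hK
    have hKbal : B K := hBbridge H' x y hxy hH'bal hreach
    have hverts : K.verts = H'.verts := by
      rw [hK, SimpleGraph.Subgraph.verts_sup, SimpleGraph.subgraphOfAdj_verts]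
      apply Set.union_eq_self_of_subset_right
      rintro z (rfl | rfl)
      · exact hxv
      · exact hyv
    have hnotedge : s(x, y) ∉ H'.edgeSet := by
      intro hc
      rw [SimpleGraph.Subgraph.mem_edgeSet] at hc
      exact hreach (SimpleGraph.Adj.reachable (by exact hc))
    have hKedge : K.edgeSet = H'.edgeSet ∪ {s(x, y)} := by
      rw [hK, SimpleGraph.Subgraph.edgeSet_sup, SimpleGraph.edgeSet_subgraphOfAdj]
    have hcost : subgraphCost G w K < subgraphCost G w H' := by
      refine aux_cost_lt w hw (e := s(x, y)) ((SimpleGraph.mem_edgeSet G).2 hxy) ?_ ?_ ?_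
      · rintro f _ ⟨⟨z, hzf, hzK⟩, hfK⟩
        refine ⟨⟨z, hzf, ?_⟩, fun hc => hfK ?_⟩
        · rwa [hverts] at hzK
        · rw [hKedge]; exact Or.inl hc
      · exact ⟨⟨x, Sym2.mem_mk_left x y, hxv⟩, hnotedge⟩
      · rintro ⟨-, hc⟩
        apply hc
        rw [hKedge]
        exact Or.inr rfl
    have hdom : Dominates G w K H :=
      ⟨by rw [hverts]; exact hHsub, le_trans hcost.le hH'dom.2⟩
    exact absurd (hmin K hKbal hdom) (not_le.2 hcost)
  -- Any edge of `H` has its endpoints reachable in `H'`.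
  have step1 : ∀ x y, H.Adj x y → H'.spanningCoe.Reachable x y := by
    intro x y hxy
    by_contra hreach
    exact bridge x y hxy.adj_sub (hHsub hxy.fst_mem) (hHsub hxy.snd_mem) hreach
  -- Any two vertices of `H` are reachable in `H'`.
  have step2 : ∀ x ∈ H.verts, ∀ y ∈ H.verts, H'.spanningCoe.Reachable x y := by
    intro x hx y hy
    have h1 : H.coe.Reachable ⟨x, hx⟩ ⟨y, hy⟩ := hHconn.coe.preconnected _ _
    exact aux_reach_transfer (aux_coe_to_spanning h1) step1
  -- Every vertex of `H'` is reachable (in `H'`) to `h0`.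
  have key : ∀ v ∈ H'.verts, H'.spanningCoe.Reachable v h0 := by
    intro v hv
    by_contra hreach
    set S : Set V := {u | H'.spanningCoe.Reachable v u} with hS
    have hvS : v ∈ S := SimpleGraph.Reachable.refl v
    have hSsub : S ⊆ H'.verts := by
      intro u hu
      obtain ⟨p⟩ := (hu : H'.spanningCoe.Reachable v u)
      exact aux_mem_verts_of_walk p hv
    have hSclosed : ∀ u z, u ∈ S → H'.Adj u z → z ∈ S := by
      intro u z hu huz
      exact (hu : H'.spanningCoe.Reachable v u).trans
        (SimpleGraph.Adj.reachable (by exact huz))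
    have hh0S : h0 ∉ S := fun hc => hreach (hc : H'.spanningCoe.Reachable v h0)
    -- find an edge of `G` crossing out of `S`
    obtain ⟨p⟩ := hGconn.preconnected v h0
    obtain ⟨d, -, hdS, hdS'⟩ := p.exists_boundary_dart S hvS hh0S
    set x := d.fst with hx
    set y := d.snd with hy
    have hxyG : G.Adj x y := d.adj
    have hxv : x ∈ H'.verts := hSsub hdS
    have hnotedge : s(x, y) ∉ H'.edgeSet := by
      intro hc
      rw [SimpleGraph.Subgraph.mem_edgeSet] at hc
      exact hdS' (hSclosed x y hdS hc)
    by_cases hyv : y ∈ H'.verts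
    · -- add a bridge from `S` to the rest of `H'`
      refine bridge x y hxyG hxv hyv fun hc => hdS' ?_
      exact (hdS : H'.spanningCoe.Reachable v x).trans hc
    · -- delete the component `S`
      set K := H'.deleteVerts S with hK
      have hKbal : B K := hBdown H' K hH'bal (SimpleGraph.Subgraph.deleteVerts_le)
      have hKverts : K.verts = H'.verts \ S := rfl
      have hHK : H.verts ⊆ K.verts := by
        intro h hh
        rw [hKverts]
        refine ⟨hHsub hh, fun hc => hreach ?_⟩
        exact (hc : H'.spanningCoe.Reachable v h).trans (step2 h hh h0 hh0)
      have hcost : subgraphCost G w K < subgraphCost G w H' := by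
        refine aux_cost_lt w hw (e := s(x, y)) ((SimpleGraph.mem_edgeSet G).2 hxyG) ?_ ?_ ?_
        · intro f hfG
          induction f using Sym2.ind with
          | _ a b =>
            rintro ⟨⟨z, hzf, hzK⟩, hfK⟩
            rw [hKverts] at hzK
            refine ⟨⟨z, hzf, hzK.1⟩, fun hc => hfK ?_⟩
            rw [SimpleGraph.Subgraph.mem_edgeSet] at hc ⊢
            -- both endpoints avoid `S` since `S` is closed under `H'.Adj`
            have hab : a ∉ S ∧ b ∉ S := by
              rcases Sym2.mem_iff.1 hzf with h | h
              · refine ⟨by rw [← h]; exact hzK.2, fun hb => hzK.2 ?_⟩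
                rw [h]; exact hSclosed b a hb hc.symm
              · refine ⟨fun ha => hzK.2 ?_, by rw [← h]; exact hzK.2⟩
                rw [h]; exact hSclosed a b ha hc
            exact SimpleGraph.Subgraph.deleteVerts_adj.2
              ⟨hc.fst_mem, hab.1, hc.snd_mem, hab.2, hc⟩
        · exact ⟨⟨x, Sym2.mem_mk_left x y, hxv⟩, hnotedge⟩
        · rintro ⟨⟨z, hzf, hzK⟩, -⟩
          rw [hKverts] at hzK
          rcases Sym2.mem_iff.1 hzf with h | h
          · exact hzK.2 (by rw [h]; exact hdS)
          · exact hyv (by rw [← h]; exact hzK.1)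
      have hdom : Dominates G w K H := ⟨hHK, le_trans hcost.le hH'dom.2⟩
      exact absurd (hmin K hKbal hdom) (not_le.2 hcost)
  -- conclude connectivity of `H'`
  rw [SimpleGraph.Subgraph.connected_iff]
  refine ⟨⟨fun a b => ?_⟩, ⟨h0, hHsub hh0⟩⟩
  have hr : H'.spanningCoe.Reachable a.val b.val :=
    (key a.val a.2).trans (key b.val b.2).symm
  obtain ⟨p⟩ := hr
  exact aux_walk_to_coe p a.2 b.2
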